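/- The ring A = ℝ[X,Y,Z,T]/((1+X²)Y − (1+Z²)) is an integral domain which is not a unique factorization domain, even though f = 1+Z² is irreducible in ℝ[Z,T]. In particular, the image of 1+X² in A is neither a unit nor a prime element of A. -/

import Mathlib

noncomputable section
open MvPolynomial
open Polynomial

/-- `A = ℝ[X,Y,Z,T]/((1+X²)Y - (1+Z²))`, with variables `X,Y,Z,T` numbered `0,1,2,3`. -/
def Aex : Type :=
  MvPolynomial (Fin 4) ℝ ⧸
    Ideal.span {((1 : MvPolynomial (Fin 4) ℝ) + (MvPolynomial.X 0) ^ 2) * MvPolynomial.X 1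
      - ((1 : MvPolynomial (Fin 4) ℝ) + (MvPolynomial.X 2) ^ 2)}

instance : CommRing Aex := inferInstanceAs (CommRing (_ ⧸ _))

/-- The image of `1 + X²` in `A`. -/
def aX : Aex := Ideal.Quotient.mk _ ((1 : MvPolynomial (Fin 4) ℝ) + (MvPolynomial.X 0) ^ 2)

/-- `X^2 + 1` is irreducible over any domain admitting a ring hom to `ℝ`. -/
theorem irreducible_X_sq_add_one {R : Type*} [CommRing R] [IsDomain R] (ρ : R →+* ℝ) :
    Irreducible ((Polynomial.X : R[X]) ^ 2 + 1) := by
  have hnt : Nontrivial R := ⟨1, 0, fun h => by simpa using congrArg ρ h⟩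
  have hdeg : ((X : R[X]) ^ 2 + 1).natDegree = 2 := by compute_degree!
  constructor
  · intro hu
    have := Polynomial.natDegree_eq_zero_of_isUnit hu
    omega
  · rintro a b h
    have ha : a ≠ 0 := by rintro rfl; simp at h; exact absurd (congrArg natDegree h) (by simp [hdeg])
    have hb : b ≠ 0 := by rintro rfl; simp at h; exact absurd (congrArg natDegree h) (by simp [hdeg])
    have hab : a.natDegree + b.natDegree = 2 := by
      rw [← Polynomial.natDegree_mul ha hb, ← h, hdeg]
    have hlead : a.leadingCoeff * b.leadingCoeff = 1 := by
      have := congrArg Polynomial.leadingCoeff h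
      rw [Polynomial.leadingCoeff_mul, Polynomial.Monic.leadingCoeff (by monicity!)] at this
      exact this.symm
    rcases Nat.lt_or_ge a.natDegree 1 with h0 | h1
    · left
      have := Polynomial.eq_C_of_natDegree_eq_zero (Nat.lt_one_iff.mp h0)
      rw [this]
      exact Polynomial.isUnit_C.2 (IsUnit.of_mul_eq_one _ (by
        have : a.leadingCoeff = a.coeff 0 := by rw [Polynomial.leadingCoeff, Nat.lt_one_iff.mp h0]
        rw [← this]; exact hlead))
    rcases Nat.lt_or_ge b.natDegree 1 with h0 | h1'
    · right
      have := Polynomial.eq_C_of_natDegree_eq_zero (Nat.lt_one_iff.mp h0)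
      rw [this]
      refine Polynomial.isUnit_C.2 (IsUnit.of_mul_eq_one a.leadingCoeff ?_)
      have hb0 : b.leadingCoeff = b.coeff 0 := by rw [Polynomial.leadingCoeff, Nat.lt_one_iff.mp h0]
      rw [← hb0, mul_comm]; exact hlead
    -- both degree 1
    exfalso
    have hda : a.natDegree = 1 := by omega
    have hdb : b.natDegree = 1 := by omega
    have ea := Polynomial.eq_X_add_C_of_natDegree_le_one (hda.le)
    have eb := Polynomial.eq_X_add_C_of_natDegree_le_one (hdb.le)
    have hl : a.coeff 1 * b.coeff 1 = 1 := by
      have h1a : a.leadingCoeff = a.coeff 1 := by rw [Polynomial.leadingCoeff, hda]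
      have h1b : b.leadingCoeff = b.coeff 1 := by rw [Polynomial.leadingCoeff, hdb]
      rw [← h1a, ← h1b]; exact hlead
    set α1 := ρ (a.coeff 1) with hα1
    set α0 := ρ (a.coeff 0)
    set β1 := ρ (b.coeff 1)
    set β0 := ρ (b.coeff 0)
    have hα1β1 : α1 * β1 = 1 := by rw [hα1]; rw [← map_mul, hl, map_one]
    have hα1ne : α1 ≠ 0 := fun hz => by rw [hz, zero_mul] at hα1β1; exact one_ne_zero hα1β1.symm
    set t : ℝ := -α0 / α1 with ht
    have hev := congrArg (Polynomial.eval₂ ρ t) h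
    rw [ea, eb] at hev
    simp only [Polynomial.eval₂_add, Polynomial.eval₂_mul, Polynomial.eval₂_pow,
      Polynomial.eval₂_X, Polynomial.eval₂_C, Polynomial.eval₂_one] at hev
    have hroot : α1 * t + α0 = 0 := by rw [ht, mul_div_assoc', mul_div_cancel_left₀ _ hα1ne]; ring
    rw [show (α1 * t + α0) * (β1 * t + β0) = 0 by rw [hroot]; ring] at hev
    nlinarith [sq_nonneg t, hev]

open MvPolynomial in
theorem irreducible_one_add_X_sq (n : ℕ) :
    Irreducible ((1 : MvPolynomial (Fin (n+1)) ℝ) + (MvPolynomial.X 0) ^ 2) := by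
  have key : Irreducible ((MvPolynomial.finSuccEquiv ℝ n)
      ((1 : MvPolynomial (Fin (n+1)) ℝ) + (MvPolynomial.X 0) ^ 2)) := by
    have he : (MvPolynomial.finSuccEquiv ℝ n) ((1 : MvPolynomial (Fin (n+1)) ℝ) + (MvPolynomial.X 0) ^ 2)
        = (Polynomial.X : (MvPolynomial (Fin n) ℝ)[X]) ^ 2 + 1 := by
      rw [map_add, map_one, map_pow, MvPolynomial.finSuccEquiv_X_zero]
      ring
    rw [he]
    exact irreducible_X_sq_add_one (MvPolynomial.eval (fun _ => (0:ℝ)))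
  exact (MulEquiv.irreducible_iff (MvPolynomial.finSuccEquiv ℝ n).toMulEquiv).mp key

section Main
open MvPolynomial

abbrev Sr : Type := MvPolynomial (Fin 3) ℝ

def Fp : Sr := 1 + X 0 ^ 2
def Gp : Sr := 1 + X 1 ^ 2
def gp : Polynomial Sr := Polynomial.C Fp * Polynomial.X - Polynomial.C Gp

lemma Fp_irr : Irreducible Fp := irreducible_one_add_X_sq 2

lemma Fp_prime : Prime Fp := UniqueFactorizationMonoid.irreducible_iff_prime.mp Fp_irr

lemma Fp_ne : Fp ≠ 0 := Fp_prime.ne_zero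

lemma Fp_nmid_Gp : ¬ Fp ∣ Gp := by
  intro h
  obtain ⟨c, hc⟩ := h
  let σ : Sr →+* Polynomial ℝ :=
    (MvPolynomial.aeval (fun i : Fin 3 => if i = 0 then Polynomial.X else 0)).toRingHom
  have h2 := congrArg σ hc
  have hσG : σ Gp = 1 := by simp [σ, Gp]
  have hσF : σ Fp = 1 + Polynomial.X ^ 2 := by simp [σ, Fp]
  rw [hσG, map_mul, hσF] at h2
  have hu : IsUnit ((1 : Polynomial ℝ) + Polynomial.X ^ 2) :=
    IsUnit.of_mul_eq_one _ h2.symm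
  have := Polynomial.natDegree_eq_zero_of_isUnit hu
  have h2' : ((1 : Polynomial ℝ) + Polynomial.X ^ 2).natDegree = 2 := by compute_degree!
  omega

lemma gp_eq : gp = Polynomial.C Fp * Polynomial.X + Polynomial.C (-Gp) := by
  unfold gp; rw [map_neg]; ring

lemma gp_natDegree : gp.natDegree = 1 := by
  rw [gp_eq]; exact Polynomial.natDegree_linear Fp_ne

lemma gp_ne : gp ≠ 0 := fun h => by simpa [h] using gp_natDegree

lemma gp_const_factor : ∀ u v : Polynomial Sr, gp = u * v → u.natDegree = 0 → IsUnit u := by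
  intro u v huv hu0
  obtain ⟨c, rfl⟩ := Polynomial.natDegree_eq_zero.mp hu0
  have hF : Fp = c * v.coeff 1 := by
    have := congrArg (fun q => Polynomial.coeff q 1) huv
    simpa [gp, Polynomial.coeff_sub, Polynomial.coeff_C_mul] using this
  have hG : -Gp = c * v.coeff 0 := by
    have := congrArg (fun q => Polynomial.coeff q 0) huv
    simpa [gp, Polynomial.coeff_sub, Polynomial.coeff_C_mul] using this
  rcases Fp_irr.isUnit_or_isUnit hF with h1 | h1
  · exact Polynomial.isUnit_C.mpr h1
  · exfalso
    apply Fp_nmid_Gp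
    obtain ⟨w, hw⟩ := h1.exists_right_inv
    have hFc : Fp ∣ c := ⟨w, by rw [← mul_one c, ← hw, ← mul_assoc, ← hF]⟩
    exact hFc.trans ⟨-(v.coeff 0), by rw [← neg_neg Gp, hG]; ring⟩

lemma gp_irr : Irreducible gp := by
  constructor
  · intro hu
    have := Polynomial.natDegree_eq_zero_of_isUnit hu
    rw [gp_natDegree] at this; exact one_ne_zero this
  · rintro a b h
    have ha : a ≠ 0 := fun h0 => gp_ne (by rw [h, h0, zero_mul])
    have hb : b ≠ 0 := fun h0 => gp_ne (by rw [h, h0, mul_zero])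
    have hab : a.natDegree + b.natDegree = 1 := by
      rw [← Polynomial.natDegree_mul ha hb, ← h, gp_natDegree]
    rcases Nat.eq_zero_or_pos a.natDegree with h0 | h1
    · exact Or.inl (gp_const_factor a b h h0)
    · have hb0 : b.natDegree = 0 := by omega
      exact Or.inr (gp_const_factor b a (by rw [h, mul_comm]) hb0)

lemma gp_prime : Prime gp := UniqueFactorizationMonoid.irreducible_iff_prime.mp gp_irr

def pp : MvPolynomial (Fin 4) ℝ :=
  ((1 : MvPolynomial (Fin 4) ℝ) + (MvPolynomial.X 0) ^ 2) * MvPolynomial.X 1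
      - ((1 : MvPolynomial (Fin 4) ℝ) + (MvPolynomial.X 2) ^ 2)

def Phi : MvPolynomial (Fin 4) ℝ ≃+* Polynomial Sr :=
  ((MvPolynomial.renameEquiv ℝ (Equiv.swap (0 : Fin 4) 1)).trans
    (MvPolynomial.finSuccEquiv ℝ 3)).toRingEquiv

lemma Phi_X0 : Phi (X 0) = Polynomial.C (X 0) := by
  show (MvPolynomial.finSuccEquiv ℝ 3) (rename (Equiv.swap (0 : Fin 4) 1) (X 0)) = _
  rw [rename_X, Equiv.swap_apply_left]
  have : (1 : Fin 4) = Fin.succ 0 := rfl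
  rw [this, finSuccEquiv_X_succ]

lemma Phi_X1 : Phi (X 1) = Polynomial.X := by
  show (MvPolynomial.finSuccEquiv ℝ 3) (rename (Equiv.swap (0 : Fin 4) 1) (X 1)) = _
  rw [rename_X, Equiv.swap_apply_right, finSuccEquiv_X_zero]

lemma Phi_X2 : Phi (X 2) = Polynomial.C (X 1) := by
  show (MvPolynomial.finSuccEquiv ℝ 3) (rename (Equiv.swap (0 : Fin 4) 1) (X 2)) = _
  rw [rename_X, Equiv.swap_apply_of_ne_of_ne (by decide) (by decide)]
  have : (2 : Fin 4) = Fin.succ 1 := rfl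
  rw [this, finSuccEquiv_X_succ]

lemma Phi_p : Phi pp = gp := by
  unfold pp gp Fp Gp
  rw [map_sub, map_mul, map_add, map_add, map_pow, map_pow, map_one, Phi_X0, Phi_X1, Phi_X2]
  push_cast [map_add, map_one, map_pow]
  ring

lemma Phi_aXrep : Phi ((1 : MvPolynomial (Fin 4) ℝ) + (MvPolynomial.X 0) ^ 2)
    = Polynomial.C Fp := by
  rw [map_add, map_one, map_pow, Phi_X0]
  unfold Fp
  push_cast [map_add, map_one, map_pow]
  ring

lemma pp_prime : Prime pp := by
  refine (MulEquiv.prime_iff Phi.toMulEquiv (p := pp)).mp ?_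
  rw [show Phi.toMulEquiv pp = gp from Phi_p]
  exact gp_prime



def mkA : MvPolynomial (Fin 4) ℝ →+* Aex := Ideal.Quotient.mk (Ideal.span {pp})

lemma aX_eq : aX = mkA (1 + MvPolynomial.X 0 ^ 2) := rfl

lemma spanp_isPrime : (Ideal.span {pp}).IsPrime :=
  (Ideal.span_singleton_prime pp_prime.ne_zero).mpr pp_prime

lemma domAex : IsDomain Aex := by
  have := spanp_isPrime
  exact inferInstanceAs (IsDomain (MvPolynomial (Fin 4) ℝ ⧸ Ideal.span {pp}))

def Aex' : Type := Polynomial Sr ⧸ Ideal.span {gp}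

instance : CommRing Aex' := inferInstanceAs (CommRing (_ ⧸ _))

def mkB : Polynomial Sr →+* Aex' := Ideal.Quotient.mk (Ideal.span {gp})

lemma spang_isPrime : (Ideal.span {gp}).IsPrime :=
  (Ideal.span_singleton_prime gp_prime.ne_zero).mpr gp_prime

instance : IsDomain Aex' := by
  have := spang_isPrime
  exact inferInstanceAs (IsDomain (Polynomial Sr ⧸ Ideal.span {gp}))

def Psi : Aex ≃+* Aex' :=
  Ideal.quotientEquiv _ _ Phi (by rw [Ideal.map_span, Set.image_singleton, show ((Phi : MvPolynomial (Fin 4) ℝ →+* Polynomial Sr) : MvPolynomial (Fin 4) ℝ → Polynomial Sr) ((1 + MvPolynomial.X 0 ^ 2) * MvPolynomial.X 1 - (1 + MvPolynomial.X 2 ^ 2)) = gp from Phi_p])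

lemma Psi_mk (q : MvPolynomial (Fin 4) ℝ) : Psi (mkA q) = mkB (Phi q) :=
  Ideal.quotientEquiv_mk _ _ _ _ q


lemma mkB_gp : mkB gp = 0 :=
  Ideal.Quotient.eq_zero_iff_mem.mpr (Ideal.mem_span_singleton_self gp)

/-- Reduction: every element of `Aex'` has a representative which is constant or whose
leading coefficient is not divisible by `Fp`. -/
lemma reduce : ∀ m : ℕ, ∀ D : Polynomial Sr, D.natDegree ≤ m →
    ∃ D' : Polynomial Sr, mkB D' = mkB D ∧ (D'.natDegree = 0 ∨ ¬ Fp ∣ D'.leadingCoeff) := by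
  intro m
  induction m with
  | zero => exact fun D hD => ⟨D, rfl, Or.inl (Nat.le_zero.mp hD)⟩
  | succ m ih =>
    intro D hD
    rcases Nat.eq_zero_or_pos D.natDegree with h0 | hpos
    · exact ⟨D, rfl, Or.inl h0⟩
    by_cases hF : Fp ∣ D.leadingCoeff
    · obtain ⟨c, hc⟩ := hF
      set D₂ := D - gp * (Polynomial.C c * Polynomial.X ^ (D.natDegree - 1)) with hD₂
      have hmk : mkB D₂ = mkB D := by
        rw [hD₂, map_sub, map_mul, mkB_gp, zero_mul, sub_zero]
      have hexp : D.natDegree - 1 + 1 = D.natDegree := Nat.succ_pred_eq_of_pos hpos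
      have hid : D₂ = (D - Polynomial.C D.leadingCoeff * Polynomial.X ^ D.natDegree)
          + Polynomial.C (Gp * c) * Polynomial.X ^ (D.natDegree - 1) := by
        rw [hD₂, gp_eq, hc, ← hexp]
        push_cast [map_mul, map_neg]
        ring
      have hdeg : D₂.natDegree ≤ m := by
        rw [hid, Polynomial.self_sub_C_mul_X_pow]
        refine le_trans (Polynomial.natDegree_add_le _ _) ?_
        have h1 := Polynomial.eraseLead_natDegree_le D
        have h2 : (Polynomial.C (Gp * c) * Polynomial.X ^ (D.natDegree - 1)).natDegree
            ≤ D.natDegree - 1 := Polynomial.natDegree_C_mul_X_pow_le _ _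
        omega
      obtain ⟨D', h1, h2⟩ := ih D₂ hdeg
      exact ⟨D', h1.trans hmk, h2⟩
    · exact ⟨D, rfl, Or.inr hF⟩

lemma norm_rep (α : Aex') : ∃ D : Polynomial Sr,
    mkB D = α ∧ (D.natDegree = 0 ∨ ¬ Fp ∣ D.leadingCoeff) := by
  obtain ⟨D₀, hD₀⟩ := Ideal.Quotient.mk_surjective α
  obtain ⟨D, h1, h2⟩ := reduce D₀.natDegree D₀ le_rfl
  rw [show mkB D₀ = α from hD₀] at h1
  exact ⟨D, h1, h2⟩


lemma PD_mul (D E H : Polynomial Sr) (h : D * E = Polynomial.C Fp + gp * H) :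
    (Polynomial.scaleRoots D Fp).eval Gp * (Polynomial.scaleRoots E Fp).eval Gp
      = Fp ^ (D.natDegree + E.natDegree + 1) := by
  set K := FractionRing Sr
  set ι : Sr →+* K := algebraMap Sr K with hι
  have hinj : Function.Injective ι := IsFractionRing.injective Sr K
  have hFne : ι Fp ≠ 0 := fun h0 => Fp_ne (hinj (by rw [h0, map_zero]))
  set r : K := ι Gp / ι Fp with hr
  have hFr : ι Fp * r = ι Gp := by rw [hr, mul_div_assoc', mul_div_cancel_left₀ _ hFne]
  have hg : Polynomial.eval₂ ι r gp = 0 := by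
    unfold gp
    rw [Polynomial.eval₂_sub, Polynomial.eval₂_mul, Polynomial.eval₂_C, Polynomial.eval₂_C,
      Polynomial.eval₂_X, hFr, sub_self]
  have hD := Polynomial.scaleRoots_eval₂_mul (p := D) ι r Fp
  have hE := Polynomial.scaleRoots_eval₂_mul (p := E) ι r Fp
  rw [hFr, Polynomial.eval₂_at_apply] at hD hE
  have hmain := congrArg (Polynomial.eval₂ ι r) h
  rw [Polynomial.eval₂_mul, Polynomial.eval₂_add, Polynomial.eval₂_C, Polynomial.eval₂_mul,
    hg, zero_mul, add_zero] at hmain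
  apply hinj
  rw [map_mul, hD, hE, map_pow]
  rw [mul_mul_mul_comm, hmain, ← pow_add, pow_succ]

lemma not_dvd_P (D : Polynomial Sr) (h1 : 1 ≤ D.natDegree) (h2 : ¬ Fp ∣ D.leadingCoeff) :
    ¬ Fp ∣ (Polynomial.scaleRoots D Fp).eval Gp := by
  intro hdvd
  have hsum : (Polynomial.scaleRoots D Fp).eval Gp
      = ∑ i ∈ Finset.range (D.natDegree + 1), D.coeff i * Fp ^ (D.natDegree - i) * Gp ^ i := by
    rw [Polynomial.eval_eq_sum_range, Polynomial.natDegree_scaleRoots]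
    exact Finset.sum_congr rfl fun i _ => by rw [Polynomial.coeff_scaleRoots]
  rw [hsum, Finset.sum_range_succ, Nat.sub_self, pow_zero, mul_one] at hdvd
  have hrest : Fp ∣ ∑ i ∈ Finset.range D.natDegree, D.coeff i * Fp ^ (D.natDegree - i) * Gp ^ i := by
    refine Finset.dvd_sum fun i hi => ?_
    have : Fp ∣ Fp ^ (D.natDegree - i) :=
      dvd_pow_self Fp (Nat.sub_ne_zero_of_lt (Finset.mem_range.mp hi))
    exact dvd_mul_of_dvd_left (dvd_mul_of_dvd_right this _) _
  have hlead : Fp ∣ D.leadingCoeff * Gp ^ D.natDegree := by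
    have h3 := dvd_sub hdvd hrest
    rw [add_sub_cancel_left] at h3
    exact h3
  rcases Fp_prime.dvd_mul.mp hlead with h | h
  · exact h2 h
  · exact Fp_nmid_Gp (Fp_prime.dvd_of_dvd_pow h)

lemma mkB_CFp_ne : mkB (Polynomial.C Fp) ≠ 0 := by
  intro h
  have hmem := Ideal.Quotient.eq_zero_iff_mem.mp h
  obtain ⟨t, ht⟩ := Ideal.mem_span_singleton.mp hmem
  have htne : t ≠ 0 := by
    rintro rfl
    rw [mul_zero] at ht
    exact Fp_ne (by simpa using congrArg (fun q => Polynomial.coeff q 0) ht)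
  have := congrArg Polynomial.natDegree ht
  rw [Polynomial.natDegree_C, Polynomial.natDegree_mul gp_ne htne, gp_natDegree] at this
  omega

lemma key_irr (d e : Aex') (h : mkB (Polynomial.C Fp) = d * e) : IsUnit d ∨ IsUnit e := by
  obtain ⟨D, hDmk, hDn⟩ := norm_rep d
  obtain ⟨E, hEmk, hEn⟩ := norm_rep e
  have h0 : mkB (D * E - Polynomial.C Fp) = 0 := by
    rw [map_sub, map_mul, hDmk, hEmk, ← h, sub_self]
  have hmem : D * E - Polynomial.C Fp ∈ Ideal.span {gp} :=
    Ideal.Quotient.eq_zero_iff_mem.mp h0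
  obtain ⟨H, hH⟩ := Ideal.mem_span_singleton.mp hmem
  have hfac : D * E = Polynomial.C Fp + gp * H := by rw [← hH]; ring
  have hPP := PD_mul D E H hfac
  have hdvdP : Fp ∣ (Polynomial.scaleRoots D Fp).eval Gp ∨
      Fp ∣ (Polynomial.scaleRoots E Fp).eval Gp := by
    refine Fp_prime.dvd_mul.mp ?_
    rw [hPP]
    exact dvd_pow_self Fp (Nat.succ_ne_zero _)
  have main : ∀ D' E' : Polynomial Sr, ∀ d' e' : Aex', mkB D' = d' → mkB E' = e' →
      d' * e' = mkB (Polynomial.C Fp) →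
      D'.natDegree = 0 →
      Fp ∣ (Polynomial.scaleRoots D' Fp).eval Gp → IsUnit e' := by
    intro D' E' d' e' hD' _hE' hprod hd0 hdvd
    obtain ⟨c, rfl⟩ := Polynomial.natDegree_eq_zero.mp hd0
    have hc : Fp ∣ c := by
      simpa [Polynomial.scaleRoots_C] using hdvd
    obtain ⟨c₂, rfl⟩ := hc
    have hdne : d' ≠ 0 := by
      intro hz
      rw [hz, zero_mul] at hprod
      exact mkB_CFp_ne hprod.symm
    have hd'e : d' = d' * e' * mkB (Polynomial.C c₂) := by
      calc d' = mkB (Polynomial.C (Fp * c₂)) := hD'.symm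
        _ = mkB (Polynomial.C Fp) * mkB (Polynomial.C c₂) := by
            rw [← map_mul, ← Polynomial.C_mul]
        _ = d' * e' * mkB (Polynomial.C c₂) := by rw [hprod]
    have hz : d' * (1 - e' * mkB (Polynomial.C c₂)) = 0 := by
      calc d' * (1 - e' * mkB (Polynomial.C c₂))
          = d' - d' * e' * mkB (Polynomial.C c₂) := by ring
        _ = 0 := by rw [← hd'e, sub_self]
    rcases mul_eq_zero.mp hz with h1 | h1
    · exact absurd h1 hdne
    · exact IsUnit.of_mul_eq_one _ (sub_eq_zero.mp h1).symm
  rcases Nat.eq_zero_or_pos D.natDegree with hD0 | hD1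
  · rcases Nat.eq_zero_or_pos E.natDegree with hE0 | hE1
    · -- both constants
      obtain ⟨c, rfl⟩ := Polynomial.natDegree_eq_zero.mp hD0
      obtain ⟨c', rfl⟩ := Polynomial.natDegree_eq_zero.mp hE0
      have hCC : Polynomial.C (c * c' - Fp) = gp * H := by
        rw [map_sub, Polynomial.C_mul, hfac]; ring
      by_cases hHz : H = 0
      · rw [hHz, mul_zero] at hCC
        have hcc : Fp = c * c' := by
          have := sub_eq_zero.mp (Polynomial.C_eq_zero.mp hCC)
          exact this.symm
        rcases Fp_irr.isUnit_or_isUnit hcc with hu | hu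
        · exact Or.inl (by rw [← hDmk]; exact (Polynomial.isUnit_C.mpr hu).map mkB)
        · exact Or.inr (by rw [← hEmk]; exact (Polynomial.isUnit_C.mpr hu).map mkB)
      · exfalso
        have := congrArg Polynomial.natDegree hCC
        rw [Polynomial.natDegree_C, Polynomial.natDegree_mul gp_ne hHz, gp_natDegree] at this
        omega
    · -- D constant, E degree ≥ 1
      have hElead : ¬ Fp ∣ E.leadingCoeff := hEn.resolve_left (by omega)
      have hdvdD : Fp ∣ (Polynomial.scaleRoots D Fp).eval Gp :=
        hdvdP.resolve_right (not_dvd_P E hE1 hElead)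
      exact Or.inr (main D E d e hDmk hEmk h.symm hD0 hdvdD)
  · rcases Nat.eq_zero_or_pos E.natDegree with hE0 | hE1
    · -- E constant, D degree ≥ 1
      have hDlead : ¬ Fp ∣ D.leadingCoeff := hDn.resolve_left (by omega)
      have hdvdE : Fp ∣ (Polynomial.scaleRoots E Fp).eval Gp :=
        hdvdP.resolve_left (not_dvd_P D hD1 hDlead)
      exact Or.inl (main E D e d hEmk hDmk (by rw [mul_comm, ← h]) hE0 hdvdE)
    · exfalso
      have hDlead : ¬ Fp ∣ D.leadingCoeff := hDn.resolve_left (by omega)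
      have hElead : ¬ Fp ∣ E.leadingCoeff := hEn.resolve_left (by omega)
      rcases hdvdP with h1 | h1
      · exact not_dvd_P D hD1 hDlead h1
      · exact not_dvd_P E hE1 hElead h1


def chi (v : Fin 4 → ℂ) (hv : MvPolynomial.eval₂ (algebraMap ℝ ℂ) v pp = 0) : Aex →+* ℂ :=
  Ideal.Quotient.lift (Ideal.span {pp}) (MvPolynomial.eval₂Hom (algebraMap ℝ ℂ) v) (by
    intro a ha
    obtain ⟨t, rfl⟩ := Ideal.mem_span_singleton.mp ha
    rw [map_mul]
    have : (MvPolynomial.eval₂Hom (algebraMap ℝ ℂ) v) pp = 0 := hv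
    rw [this, zero_mul])

lemma chi_mk (v : Fin 4 → ℂ) (hv : MvPolynomial.eval₂ (algebraMap ℝ ℂ) v pp = 0)
    (q : MvPolynomial (Fin 4) ℝ) :
    chi v hv (mkA q) = MvPolynomial.eval₂ (algebraMap ℝ ℂ) v q :=
  Ideal.Quotient.lift_mk _ _ _

lemma hv_minus : MvPolynomial.eval₂ (algebraMap ℝ ℂ) ![Complex.I, 0, -Complex.I, 0] pp = 0 := by
  simp [pp, MvPolynomial.eval₂_mul, MvPolynomial.eval₂_sub, MvPolynomial.eval₂_add,
    MvPolynomial.eval₂_one, MvPolynomial.eval₂_pow, MvPolynomial.eval₂_X]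

lemma hv_plus : MvPolynomial.eval₂ (algebraMap ℝ ℂ) ![Complex.I, 0, Complex.I, 0] pp = 0 := by
  simp [pp, MvPolynomial.eval₂_mul, MvPolynomial.eval₂_sub, MvPolynomial.eval₂_add,
    MvPolynomial.eval₂_one, MvPolynomial.eval₂_pow, MvPolynomial.eval₂_X]

lemma hv_zero : MvPolynomial.eval₂ (algebraMap ℝ ℂ) ![0, 1, 0, 0] pp = 0 := by
  simp [pp, MvPolynomial.eval₂_mul, MvPolynomial.eval₂_sub, MvPolynomial.eval₂_add,
    MvPolynomial.eval₂_one, MvPolynomial.eval₂_pow, MvPolynomial.eval₂_X]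

lemma aX_ne : aX ≠ 0 := by
  intro h
  have h2 := congrArg (chi ![0, 1, 0, 0] hv_zero) h
  rw [aX_eq, chi_mk, map_zero] at h2
  simp [MvPolynomial.eval₂_add, MvPolynomial.eval₂_one, MvPolynomial.eval₂_pow,
    MvPolynomial.eval₂_X] at h2

lemma aX_not_unit : ¬ IsUnit aX := by
  intro h
  have h2 := h.map (chi ![Complex.I, 0, -Complex.I, 0] hv_minus)
  rw [aX_eq, chi_mk] at h2
  simp [MvPolynomial.eval₂_add, MvPolynomial.eval₂_one, MvPolynomial.eval₂_pow,
    MvPolynomial.eval₂_X, Complex.I_sq] at h2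

lemma aX_not_dvd_sub : ¬ aX ∣ mkA (MvPolynomial.X 2 - MvPolynomial.X 0) := by
  rintro ⟨u, hu⟩
  obtain ⟨U, hU⟩ : ∃ U, mkA U = u := Ideal.Quotient.mk_surjective u
  rw [← hU, aX_eq, ← map_mul] at hu
  have h2 := congrArg (chi ![Complex.I, 0, -Complex.I, 0] hv_minus) hu
  rw [chi_mk, chi_mk] at h2
  rw [MvPolynomial.eval₂_sub, MvPolynomial.eval₂_mul, MvPolynomial.eval₂_add,
    MvPolynomial.eval₂_one, MvPolynomial.eval₂_pow, MvPolynomial.eval₂_X,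
    MvPolynomial.eval₂_X] at h2
  simp [Complex.I_sq] at h2
  exact Complex.I_ne_zero (by linear_combination (-1/2 : ℂ) * h2)

lemma aX_not_dvd_add : ¬ aX ∣ mkA (MvPolynomial.X 2 + MvPolynomial.X 0) := by
  rintro ⟨u, hu⟩
  obtain ⟨U, hU⟩ : ∃ U, mkA U = u := Ideal.Quotient.mk_surjective u
  rw [← hU, aX_eq, ← map_mul] at hu
  have h2 := congrArg (chi ![Complex.I, 0, Complex.I, 0] hv_plus) hu
  rw [chi_mk, chi_mk] at h2
  rw [MvPolynomial.eval₂_add, MvPolynomial.eval₂_mul, MvPolynomial.eval₂_add,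
    MvPolynomial.eval₂_one, MvPolynomial.eval₂_pow, MvPolynomial.eval₂_X,
    MvPolynomial.eval₂_X] at h2
  simp [Complex.I_sq] at h2

lemma aX_dvd : aX ∣ mkA (MvPolynomial.X 2 - MvPolynomial.X 0)
    * mkA (MvPolynomial.X 2 + MvPolynomial.X 0) := by
  refine ⟨mkA (MvPolynomial.X 1 - 1), ?_⟩
  rw [aX_eq, ← map_mul, ← map_mul]
  have hmem : (MvPolynomial.X 2 - MvPolynomial.X 0) * (MvPolynomial.X 2 + MvPolynomial.X 0)
      - (1 + MvPolynomial.X 0 ^ 2) * (MvPolynomial.X 1 - 1) ∈ Ideal.span {pp} := by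
    have : (MvPolynomial.X 2 - MvPolynomial.X 0) * (MvPolynomial.X 2 + MvPolynomial.X 0)
        - (1 + MvPolynomial.X 0 ^ 2) * (MvPolynomial.X 1 - 1) = -pp := by
      unfold pp; ring
    rw [this]
    exact neg_mem (Ideal.mem_span_singleton_self pp)
  exact Ideal.Quotient.eq.mpr hmem

lemma aX_not_prime : ¬ Prime aX := by
  intro hp
  rcases hp.2.2 _ _ aX_dvd with h | h
  · exact aX_not_dvd_sub h
  · exact aX_not_dvd_add h

lemma aX_irr : Irreducible aX := by
  refine ⟨aX_not_unit, ?_⟩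
  rintro d e hde
  have h2 := congrArg Psi hde
  rw [aX_eq, Psi_mk, map_mul] at h2
  rw [show Phi (1 + MvPolynomial.X 0 ^ 2) = Polynomial.C Fp from Phi_aXrep] at h2
  rcases key_irr _ _ h2 with hu | hu
  · left
    have := hu.map Psi.symm.toRingHom
    simpa using this
  · right
    have := hu.map Psi.symm.toRingHom
    simpa using this

/-- `A = ℝ[X,Y,Z,T]/((1+X²)Y - (1+Z²))` is an integral domain which is
not a UFD, although `f = 1 + Z²` is irreducible in `ℝ[Z,T]`; the image of `1+X²` in `A`
is neither a unit nor a prime element. -/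
theorem stmt6 :
    Irreducible ((1 : MvPolynomial (Fin 2) ℝ) + (MvPolynomial.X 0) ^ 2) ∧
    ∃ _ : IsDomain Aex,
      ¬ IsUnit aX ∧ ¬ Prime aX ∧ ¬ UniqueFactorizationMonoid Aex := by
  refine ⟨irreducible_one_add_X_sq 1, domAex, aX_not_unit, aX_not_prime, ?_⟩
  intro h
  haveI := domAex
  haveI := h
  exact aX_not_prime (UniqueFactorizationMonoid.irreducible_iff_prime.mp aX_irr)

end Main
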